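/- Let X = (ℝⁿ, ‖·‖) be a Banach space with dual norm ‖·‖_*, let A = (a_{ij}) be a nonsingular n×n real matrix with cofactors A_{ij}, and set y_j = (A_{1j},…,A_{nj})ᵀ. Then the largest γ > 0 with γB_X ⊆ A([-1,1]ⁿ) equals min over i ∈ [n] of |det A| / ‖y_i‖_*. -/

import Mathlib

open scoped Pointwise

/-- The dual norm `‖y‖_* = sup {yᵀx : f x ≤ 1}` of `y` with respect to the
norm `f` on `ℝⁿ`. -/
noncomputable def dualNorm {n : ℕ} (f : Seminorm ℝ (Fin n → ℝ))
    (y : Fin n → ℝ) : ℝ :=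
  sSup {d : ℝ | ∃ x : Fin n → ℝ, f x ≤ 1 ∧ d = ∑ i, y i * x i}


namespace Gamma2Aux

variable {n : ℕ}

lemma sem_sum_le {ι : Type*} (f : Seminorm ℝ (Fin n → ℝ)) (s : Finset ι)
    (g : ι → (Fin n → ℝ)) : f (∑ i ∈ s, g i) ≤ ∑ i ∈ s, f (g i) := by
  classical
  induction s using Finset.cons_induction with
  | empty => simp
  | cons a s ha ih =>
    rw [Finset.sum_cons, Finset.sum_cons]
    exact (map_add_le_add f _ _).trans (by linarith)

/-- upper bound: `f x ≤ C ‖x‖`. -/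
lemma exists_upper (f : Seminorm ℝ (Fin n → ℝ)) :
    ∃ C : ℝ, 0 ≤ C ∧ ∀ x, f x ≤ C * ‖x‖ := by
  refine ⟨∑ i, f ((Pi.single i (1:ℝ) : Fin n → ℝ)), Finset.sum_nonneg fun i _ => apply_nonneg f _, fun x => ?_⟩
  have hx : x = ∑ i, x i • (Pi.single i (1:ℝ) : Fin n → ℝ) := by
    funext j
    simp [Finset.sum_apply, Pi.single_apply]
  calc f x = f (∑ i, x i • (Pi.single i (1:ℝ) : Fin n → ℝ)) := by rw [← hx]
    _ ≤ ∑ i, f (x i • (Pi.single i (1:ℝ) : Fin n → ℝ)) := sem_sum_le f _ _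
    _ ≤ ∑ i, ‖x‖ * f ((Pi.single i (1:ℝ) : Fin n → ℝ)) := by
        refine Finset.sum_le_sum fun i _ => ?_
        rw [map_smul_eq_mul]
        exact mul_le_mul_of_nonneg_right
          ((norm_le_pi_norm x i).trans_eq' (Real.norm_eq_abs _).symm) (apply_nonneg f _)
    _ = (∑ i, f ((Pi.single i (1:ℝ) : Fin n → ℝ))) * ‖x‖ := by rw [← Finset.mul_sum, mul_comm]

lemma continuous_f (f : Seminorm ℝ (Fin n → ℝ)) : Continuous fun x => f x := by
  obtain ⟨C, hC0, hC⟩ := exists_upper f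
  have : LipschitzWith ⟨C, hC0⟩ fun x => f x := by
    refine LipschitzWith.of_dist_le_mul fun x y => ?_
    rw [Real.dist_eq, dist_eq_norm]
    have h1 : f x - f y ≤ f (x - y) := by
      have := map_add_le_add f (x - y) y
      simp at this; linarith
    have h2 : f y - f x ≤ f (x - y) := by
      have := map_add_le_add f (y - x) x
      have e : f (y - x) = f (x - y) := by
        rw [show y - x = -(x - y) by ring, map_neg_eq_map]
      simp at this; linarith
    have := hC (x - y)
    rw [abs_sub_le_iff]
    change f x - f y ≤ C * ‖x - y‖ ∧ f y - f x ≤ C * ‖x - y‖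
    constructor <;> linarith
  exact this.continuous

/-- lower bound: `c ‖x‖ ≤ f x` with `c > 0`. -/
lemma exists_lower (hn : 0 < n) (f : Seminorm ℝ (Fin n → ℝ)) (hf : ∀ x, f x = 0 → x = 0) :
    ∃ c : ℝ, 0 < c ∧ ∀ x, c * ‖x‖ ≤ f x := by
  haveI : Nonempty (Fin n) := Fin.pos_iff_nonempty.mp hn
  have hsne : (Metric.sphere (0 : Fin n → ℝ) 1).Nonempty :=
    NormedSpace.sphere_nonempty.mpr zero_le_one
  obtain ⟨x₀, hx₀S, hx₀min⟩ := (isCompact_sphere (0 : Fin n → ℝ) 1).exists_isMinOn hsne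
    (continuous_f f).continuousOn
  have hx₀norm : ‖x₀‖ = 1 := by simpa using hx₀S
  have hx₀ne : x₀ ≠ 0 := by intro h; rw [h] at hx₀norm; simp at hx₀norm
  have hc : 0 < f x₀ := by
    rcases (apply_nonneg f x₀).lt_or_eq with h | h
    · exact h
    · exact absurd (hf x₀ h.symm) hx₀ne
  refine ⟨f x₀, hc, fun x => ?_⟩
  rcases eq_or_ne x 0 with rfl | hx
  · simp
  · have hxn : 0 < ‖x‖ := norm_pos_iff.mpr hx
    have hmem : ‖x‖⁻¹ • x ∈ Metric.sphere (0 : Fin n → ℝ) 1 := by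
      simp [norm_smul, abs_of_pos (inv_pos.mpr hxn), inv_mul_cancel₀ hxn.ne']
    have hle : f x₀ ≤ f (‖x‖⁻¹ • x) := hx₀min hmem
    rw [map_smul_eq_mul] at hle
    simp only [Real.norm_eq_abs, abs_of_pos (inv_pos.mpr hxn)] at hle
    have := hle
    calc f x₀ * ‖x‖ ≤ (‖x‖⁻¹ * f x) * ‖x‖ := by gcongr
      _ = f x := by field_simp

end Gamma2Aux

namespace Gamma2Aux

lemma dual_nonempty (f : Seminorm ℝ (Fin n → ℝ)) (y : Fin n → ℝ) :
    {d : ℝ | ∃ x : Fin n → ℝ, f x ≤ 1 ∧ d = ∑ i, y i * x i}.Nonempty :=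
  ⟨0, 0, by simp⟩

lemma dual_bdd (hn : 0 < n) (f : Seminorm ℝ (Fin n → ℝ)) (hf : ∀ x, f x = 0 → x = 0)
    (y : Fin n → ℝ) :
    BddAbove {d : ℝ | ∃ x : Fin n → ℝ, f x ≤ 1 ∧ d = ∑ i, y i * x i} := by
  obtain ⟨c, hc, hcl⟩ := exists_lower hn f hf
  refine ⟨(∑ i, |y i|) * c⁻¹, ?_⟩
  rintro d ⟨x, hx1, rfl⟩
  have hxn : ‖x‖ ≤ c⁻¹ := by
    have h1 : c * ‖x‖ ≤ 1 := (hcl x).trans hx1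
    rw [inv_eq_one_div, le_div_iff₀ hc]; linarith
  calc ∑ i, y i * x i ≤ ∑ i, |y i| * c⁻¹ := by
        refine Finset.sum_le_sum fun i _ => ?_
        calc y i * x i ≤ |y i * x i| := le_abs_self _
          _ = |y i| * |x i| := abs_mul _ _
          _ ≤ |y i| * c⁻¹ := mul_le_mul_of_nonneg_left
              (((Real.norm_eq_abs (x i)) ▸ norm_le_pi_norm x i).trans hxn) (abs_nonneg _)
    _ = (∑ i, |y i|) * c⁻¹ := (Finset.sum_mul _ _ _).symm

lemma le_dual (hn : 0 < n) (f : Seminorm ℝ (Fin n → ℝ)) (hf : ∀ x, f x = 0 → x = 0)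
    {y x : Fin n → ℝ} (hx : f x ≤ 1) : ∑ i, y i * x i ≤ dualNorm f y :=
  le_csSup (dual_bdd hn f hf y) ⟨x, hx, rfl⟩

lemma abs_le_dual (hn : 0 < n) (f : Seminorm ℝ (Fin n → ℝ)) (hf : ∀ x, f x = 0 → x = 0)
    {y x : Fin n → ℝ} (hx : f x ≤ 1) : |∑ i, y i * x i| ≤ dualNorm f y := by
  rw [abs_le]
  constructor
  · have hx' : f (-x) ≤ 1 := by rwa [map_neg_eq_map]
    have := le_dual hn f hf (y := y) hx'
    have he : ∑ i, y i * (-x) i = -∑ i, y i * x i := by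
      rw [← Finset.sum_neg_distrib]; exact Finset.sum_congr rfl fun i _ => by simp
    rw [he] at this; linarith
  · exact le_dual hn f hf hx

lemma dual_le (f : Seminorm ℝ (Fin n → ℝ)) {y : Fin n → ℝ} {B : ℝ}
    (hb : ∀ x, f x ≤ 1 → ∑ i, y i * x i ≤ B) : dualNorm f y ≤ B :=
  csSup_le (dual_nonempty f y) (by rintro d ⟨x, hx, rfl⟩; exact hb x hx)

lemma dual_pos (hn : 0 < n) (f : Seminorm ℝ (Fin n → ℝ)) (hf : ∀ x, f x = 0 → x = 0)
    {y : Fin n → ℝ} (hy : y ≠ 0) : 0 < dualNorm f y := by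
  have hfy : 0 < f y := by
    rcases (apply_nonneg f y).lt_or_eq with h | h
    · exact h
    · exact absurd (hf y h.symm) hy
  have hx1 : f ((f y)⁻¹ • y) ≤ 1 := by
    rw [map_smul_eq_mul, Real.norm_eq_abs, abs_of_pos (inv_pos.mpr hfy),
      inv_mul_cancel₀ hfy.ne']
  have hkey := le_dual hn f hf (y := y) hx1
  refine lt_of_lt_of_le ?_ hkey
  have hsum : ∑ i, y i * ((f y)⁻¹ • y) i = (f y)⁻¹ * ∑ i, y i ^ 2 := by
    rw [Finset.mul_sum]
    exact Finset.sum_congr rfl fun i _ => by simp [Pi.smul_apply, smul_eq_mul]; ring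
  rw [hsum]
  have hy' : ∃ i, y i ≠ 0 := by
    by_contra h; push_neg at h; exact hy (funext h)
  obtain ⟨i, hi⟩ := hy'
  have : 0 < ∑ i, y i ^ 2 :=
    Finset.sum_pos' (fun j _ => sq_nonneg _) ⟨i, Finset.mem_univ i, by positivity⟩
  positivity

lemma adj_row_ne {A : Matrix (Fin n) (Fin n) ℝ} (hA : A.det ≠ 0) (i : Fin n) :
    A.adjugate i ≠ 0 := by
  intro h
  have h0 : Matrix.det (A.adjugate) = 0 :=
    Matrix.det_eq_zero_of_row_eq_zero i (fun j => congrFun h j)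
  rw [Matrix.det_adjugate] at h0
  exact pow_ne_zero _ hA h0

lemma mem_image_iff {A : Matrix (Fin n) (Fin n) ℝ} (hA : A.det ≠ 0) (y : Fin n → ℝ) :
    y ∈ (Matrix.toLin' A) '' {x | ∀ i, x i ∈ Set.Icc (-1 : ℝ) 1} ↔
      ∀ i, |∑ j, A.adjugate i j * y j| ≤ |A.det| := by
  have hrow : ∀ (z : Fin n → ℝ) i, ∑ j, A.adjugate i j * z j = (A.adjugate.mulVec z) i := by
    intro z i; simp [Matrix.mulVec, dotProduct]
  constructor
  · rintro ⟨x, hx, rfl⟩ i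
    rw [Matrix.toLin'_apply, hrow, Matrix.mulVec_mulVec, Matrix.adjugate_mul,
      Matrix.smul_mulVec, Matrix.one_mulVec]
    have := hx i
    rw [Set.mem_Icc] at this
    have hxi : |x i| ≤ 1 := abs_le.mpr this
    calc |(A.det • x) i| = |A.det| * |x i| := by simp [abs_mul]
      _ ≤ |A.det| * 1 := mul_le_mul_of_nonneg_left hxi (abs_nonneg _)
      _ = |A.det| := mul_one _
  · intro h
    refine ⟨(A.det)⁻¹ • (A.adjugate.mulVec y), fun i => ?_, ?_⟩
    · rw [Set.mem_Icc, ← abs_le]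
      have : |((A.det)⁻¹ • (A.adjugate.mulVec y)) i| = |A.det|⁻¹ * |(A.adjugate.mulVec y) i| := by
        simp [abs_mul, abs_inv]
      rw [this, ← hrow]
      rw [inv_mul_le_iff₀ (abs_pos.mpr hA), mul_one]
      exact h i
    · rw [Matrix.toLin'_apply, Matrix.mulVec_smul, Matrix.mulVec_mulVec,
        Matrix.mul_adjugate, Matrix.smul_mulVec, Matrix.one_mulVec,
        smul_smul, inv_mul_cancel₀ hA, one_smul]

end Gamma2Aux

/-- Let `X = (ℝⁿ, f)` be a Banach space, `A` a nonsingular `n×n` real matrix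
with cofactors `A_{ij}`, and `y_j = (A_{1j},…,A_{nj})ᵀ` (the `j`-th row of the
adjugate of `A`). Then the largest `γ > 0` with `γ B_X ⊆ A([-1,1]ⁿ)` equals
`min_{i ∈ [n]} |det A| / ‖y_i‖_*`. -/
theorem gamma2_eq_min_det_div_dualNorm {n : ℕ} (hn : 0 < n)
    (A : Matrix (Fin n) (Fin n) ℝ) (hA : A.det ≠ 0)
    (f : Seminorm ℝ (Fin n → ℝ)) (hf : ∀ x, f x = 0 → x = 0) :
    sSup {γ : ℝ | 0 < γ ∧
        γ • {x | f x ≤ 1}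
          ⊆ (Matrix.toLin' A) '' {x | ∀ i, x i ∈ Set.Icc (-1 : ℝ) 1}}
      = ⨅ i : Fin n, |A.det| / dualNorm f (A.adjugate i) := by
  classical
  haveI : Nonempty (Fin n) := Fin.pos_iff_nonempty.mp hn
  set d : Fin n → ℝ := fun i => dualNorm f (A.adjugate i) with hd_def
  have hd : ∀ i, 0 < d i := fun i =>
    Gamma2Aux.dual_pos hn f hf (Gamma2Aux.adj_row_ne hA i)
  have hdet : 0 < |A.det| := abs_pos.mpr hA
  set m := ⨅ i : Fin n, |A.det| / d i with hm_def
  have hbdd : BddBelow (Set.range fun i => |A.det| / d i) := Finite.bddBelow_range _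
  have hm_le : ∀ i, m ≤ |A.det| / d i := fun i => ciInf_le hbdd i
  obtain ⟨i₀, -, hi₀⟩ := Finset.exists_min_image Finset.univ (fun i => |A.det| / d i)
    ⟨Classical.arbitrary _, Finset.mem_univ _⟩
  have hm_pos : 0 < m := lt_of_lt_of_le (div_pos hdet (hd i₀))
    (le_ciInf fun j => hi₀ j (Finset.mem_univ j))
  have hsmul : ∀ (γ : ℝ) (x : Fin n → ℝ) (i : Fin n),
      ∑ j, A.adjugate i j * (γ • x) j = γ * ∑ j, A.adjugate i j * x j := by
    intro γ x i
    rw [Finset.mul_sum]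
    exact Finset.sum_congr rfl fun j _ => by simp [smul_eq_mul]; ring
  have hset : {γ : ℝ | 0 < γ ∧
      γ • {x | f x ≤ 1}
        ⊆ (Matrix.toLin' A) '' {x | ∀ i, x i ∈ Set.Icc (-1 : ℝ) 1}} = Set.Ioc 0 m := by
    ext γ
    simp only [Set.mem_setOf_eq, Set.mem_Ioc]
    constructor
    · rintro ⟨hγ, hsub⟩
      refine ⟨hγ, le_ciInf fun i => ?_⟩
      have key : d i ≤ |A.det| / γ := by
        refine Gamma2Aux.dual_le f fun x hx => ?_
        have him := hsub (Set.smul_mem_smul_set (a := γ) hx)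
        rw [Gamma2Aux.mem_image_iff hA] at him
        have hi := him i
        rw [hsmul, abs_mul, abs_of_pos hγ] at hi
        have habs : |∑ j, A.adjugate i j * x j| ≤ |A.det| / γ := by
          rw [le_div_iff₀ hγ]
          linarith [mul_comm γ (|∑ j, A.adjugate i j * x j|)]
        exact (le_abs_self _).trans habs
      rw [le_div_iff₀ hγ] at key
      rw [le_div_iff₀ (hd i)]
      linarith [mul_comm (d i) γ]
    · rintro ⟨hγ, hγm⟩
      refine ⟨hγ, ?_⟩
      intro y hy
      rw [Set.mem_smul_set] at hy
      obtain ⟨x, hx, rfl⟩ := hy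
      rw [Gamma2Aux.mem_image_iff hA]
      intro i
      rw [hsmul, abs_mul, abs_of_pos hγ]
      have h1 : |∑ j, A.adjugate i j * x j| ≤ d i :=
        Gamma2Aux.abs_le_dual hn f hf hx
      have h2 : m * d i ≤ |A.det| := by
        have := hm_le i
        rwa [le_div_iff₀ (hd i)] at this
      calc γ * |∑ j, A.adjugate i j * x j| ≤ γ * d i :=
            mul_le_mul_of_nonneg_left h1 hγ.le
        _ ≤ m * d i := mul_le_mul_of_nonneg_right hγm (hd i).le
        _ ≤ |A.det| := h2
  rw [hset, csSup_Ioc hm_pos]
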